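/- arXiv:1708.06479 — 3 statements merged into one kernel-verified Lean document; each statement's English description precedes it below -/
import Mathlib

section
/- Let N ≥ 1 be an integer, let f : ℝ → ℝ be an arbitrary function, and let x be real. For k ≥ 0 let α_k denote the coefficient of X^k in the polynomial ∏_{i=0}^{N−2} (1 + X^{2^i})^{N−1−i} (interpreted as the constant polynomial 1 when N = 1). Then ∑_{n=0}^{2^N−1} (−1)^{s_2(n)}·f(x+n) = (−1)^N · ∑_{k=0}^{2^N−N−1} α_k · Δ^N f(x+k), where Δ^N f(y) = ∑_{l=0}^{N} C(N,l)·(−1)^{N−l}·f(y+l) is the N-th iterated forward difference with step 1. -/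
/-- Number of ones in the binary expansion of `n` (sum of base-2 digits). -/
def s2 (n : ℕ) : ℕ := (Nat.digits 2 n).sum

open Polynomial Finset

lemma s2_rec (n : ℕ) : s2 n = n % 2 + s2 (n / 2) := by
  rcases eq_or_ne n 0 with rfl | h
  · simp [s2]
  · rw [s2, Nat.digits_def' (by norm_num : 1 < 2) (Nat.pos_of_ne_zero h)]
    simp [s2]

lemma s2_add_pow (N : ℕ) : ∀ n < 2 ^ N, s2 (2 ^ N + n) = s2 n + 1 := by
  induction N with
  | zero =>
    intro n hn
    interval_cases n
    simp [s2]
  | succ N ih =>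
    intro n hn
    have h2 : 2 ^ (N + 1) = 2 * 2 ^ N := by ring
    rw [s2_rec (2 ^ (N + 1) + n), s2_rec n]
    have h3 : (2 ^ (N + 1) + n) % 2 = n % 2 := by omega
    have h4 : (2 ^ (N + 1) + n) / 2 = 2 ^ N + n / 2 := by omega
    rw [h3, h4, ih (n / 2) (by omega)]
    ring

lemma telescope (N : ℕ) :
    (1 - X : ℤ[X]) * ∏ i ∈ range N, (1 + X ^ (2 ^ i)) = 1 - X ^ (2 ^ N) := by
  induction N with
  | zero => simp
  | succ N ih =>
    rw [prod_range_succ, ← mul_assoc, ih]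
    have h2 : (2 : ℕ) ^ (N + 1) = 2 ^ N * 2 := by ring
    rw [h2, pow_mul]
    ring

lemma prodQ (N : ℕ) :
    ∏ i ∈ range N, (1 - X ^ (2 ^ i) : ℤ[X]) =
      (1 - X) ^ N * ∏ i ∈ range (N - 1), (1 + X ^ (2 ^ i)) ^ (N - 1 - i) := by
  induction N with
  | zero => simp
  | succ N ih =>
    rw [prod_range_succ, ih, ← telescope N]
    have hN0 : ∏ i ∈ range N, ((1 : ℤ[X]) + X ^ (2 ^ i)) ^ (N - 1 - i) =
        ∏ i ∈ range (N - 1), (1 + X ^ (2 ^ i)) ^ (N - 1 - i) := by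
      cases N with
      | zero => simp
      | succ M =>
        rw [prod_range_succ]
        simp
    have hP : (∏ i ∈ range (N + 1 - 1), ((1 : ℤ[X]) + X ^ (2 ^ i)) ^ (N + 1 - 1 - i)) =
        (∏ i ∈ range (N - 1), ((1 : ℤ[X]) + X ^ (2 ^ i)) ^ (N - 1 - i)) *
          ∏ i ∈ range N, (1 + X ^ (2 ^ i)) := by
      rw [← hN0, ← prod_mul_distrib]
      simp only [Nat.add_sub_cancel]
      refine prod_congr rfl ?_
      intro i hi
      rw [← pow_succ]
      congr 1
      have := mem_range.mp hi
      omega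
    rw [hP]
    ring

lemma Qform (N : ℕ) :
    ∏ i ∈ range N, (1 - X ^ (2 ^ i) : ℤ[X]) =
      ∑ n ∈ range (2 ^ N), C ((-1 : ℤ) ^ s2 n) * X ^ n := by
  induction N with
  | zero => simp [s2]
  | succ N ih =>
    rw [prod_range_succ, ih]
    have h2 : 2 ^ (N + 1) = 2 ^ N + 2 ^ N := by ring
    rw [h2, Finset.sum_range_add]
    rw [mul_sub, mul_one, Finset.sum_mul, sub_eq_add_neg, ← Finset.sum_neg_distrib]
    congr 1
    refine sum_congr rfl ?_
    intro n hn
    rw [s2_add_pow N n (mem_range.mp hn), pow_succ, pow_add, map_mul]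
    simp only [map_neg, map_one]
    ring

lemma Qcoeff (N n : ℕ) :
    (∏ i ∈ range N, (1 - X ^ (2 ^ i) : ℤ[X])).coeff n =
      if n < 2 ^ N then (-1 : ℤ) ^ s2 n else 0 := by
  rw [Qform, finset_sum_coeff]
  simp only [coeff_C_mul, coeff_X_pow]
  split_ifs with h
  · rw [Finset.sum_eq_single n]
    · simp
    · intro m _ hm
      simp [Ne.symm hm]
    · intro hn
      exact absurd (mem_range.mpr h) hn
  · refine Finset.sum_eq_zero ?_
    intro m hm
    have hmn : m ≠ n := by
      have := mem_range.mp hm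
      omega
    simp [Ne.symm hmn]

lemma geomsum (M : ℕ) : ∑ i ∈ range M, 2 ^ i + 1 = 2 ^ M := by
  induction M with
  | zero => simp
  | succ M ih => rw [sum_range_succ]; omega

lemma sumform (M : ℕ) : ∑ i ∈ range M, (M - i) * 2 ^ i + (M + 2) = 2 ^ (M + 1) := by
  induction M with
  | zero => simp
  | succ M ih =>
    have h1 : ∑ i ∈ range (M + 1), (M + 1 - i) * 2 ^ i =
        ∑ i ∈ range (M + 1), (M - i) * 2 ^ i + ∑ i ∈ range (M + 1), 2 ^ i := by
      rw [← Finset.sum_add_distrib]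
      refine sum_congr rfl ?_
      intro i hi
      have := mem_range.mp hi
      have : M + 1 - i = (M - i) + 1 := by omega
      rw [this]; ring
    have h2 : ∑ i ∈ range (M + 1), (M - i) * 2 ^ i = ∑ i ∈ range M, (M - i) * 2 ^ i := by
      rw [sum_range_succ]; simp
    have h3 := geomsum (M + 1)
    have h4 : (2:ℕ) ^ (M + 1 + 1) = 2 ^ (M + 1) + 2 ^ (M + 1) := by ring
    omega

lemma Pdeg (N : ℕ) (hN : 1 ≤ N) :
    (∏ i ∈ range (N - 1), ((1 : ℤ[X]) + X ^ (2 ^ i)) ^ (N - 1 - i)).natDegree ≤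
      2 ^ N - N - 1 := by
  refine le_trans (natDegree_prod_le _ _) ?_
  have h1 : ∀ i ∈ range (N - 1),
      (((1 : ℤ[X]) + X ^ (2 ^ i)) ^ (N - 1 - i)).natDegree ≤ (N - 1 - i) * 2 ^ i := by
    intro i _
    refine le_trans (natDegree_pow_le) ?_
    gcongr
    refine le_trans (natDegree_add_le _ _) ?_
    simp
  refine le_trans (Finset.sum_le_sum h1) ?_
  have := sumform (N - 1)
  have hNN : N - 1 + 1 = N := by omega
  rw [hNN] at this
  have hN2 : N + 1 ≤ 2 ^ N := (Nat.lt_two_pow_self (n := N))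
  omega

-- convolution lemma
lemma conv (p q : ℤ[X]) (a b : ℕ) (hp : ∀ k, a ≤ k → p.coeff k = 0)
    (hq : ∀ l, b ≤ l → q.coeff l = 0) (g : ℕ → ℝ) :
    ∑ n ∈ range (a + b), ((p * q).coeff n : ℝ) * g n =
      ∑ k ∈ range a, (p.coeff k : ℝ) * ∑ l ∈ range b, (q.coeff l : ℝ) * g (k + l) := by
  set M := a + b with hM
  set F : ℕ × ℕ → ℝ := fun x => (p.coeff x.1 : ℝ) * (q.coeff x.2 : ℝ) * g (x.1 + x.2) with hF
  have key1 : ∑ n ∈ range M, ((p * q).coeff n : ℝ) * g n =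
      ∑ n ∈ range M, ∑ x ∈ Finset.HasAntidiagonal.antidiagonal n, F x := by
    refine sum_congr rfl ?_
    intro n _
    rw [coeff_mul]
    push_cast
    rw [Finset.sum_mul]
    refine sum_congr rfl ?_
    intro x hx
    have := Finset.HasAntidiagonal.mem_antidiagonal.mp hx
    rw [hF]
    simp only
    rw [this]
  have disj : Set.PairwiseDisjoint (range M : Set ℕ) Finset.HasAntidiagonal.antidiagonal := by
    intro m _ n _ hmn
    refine Finset.disjoint_left.mpr ?_
    intro x hx hx'
    exact hmn ((Finset.HasAntidiagonal.mem_antidiagonal.mp hx).symm.trans (Finset.HasAntidiagonal.mem_antidiagonal.mp hx'))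
  have key2 : ∑ n ∈ range M, ∑ x ∈ Finset.HasAntidiagonal.antidiagonal n, F x =
      ∑ x ∈ (range M).biUnion Finset.HasAntidiagonal.antidiagonal, F x := (Finset.sum_biUnion disj).symm
  have sub1 : (range M).biUnion Finset.HasAntidiagonal.antidiagonal ⊆ range M ×ˢ range M := by
    intro x hx
    rcases Finset.mem_biUnion.mp hx with ⟨n, hn, hxn⟩
    have h := Finset.HasAntidiagonal.mem_antidiagonal.mp hxn
    have hn' := mem_range.mp hn
    exact Finset.mem_product.mpr ⟨mem_range.mpr (by omega), mem_range.mpr (by omega)⟩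
  have key3 : ∑ x ∈ (range M).biUnion Finset.HasAntidiagonal.antidiagonal, F x =
      ∑ x ∈ range M ×ˢ range M, F x := by
    refine Finset.sum_subset sub1 ?_
    intro x hx hx'
    have hsum : ¬ (x.1 + x.2 < M) := by
      intro hlt
      exact hx' (Finset.mem_biUnion.mpr ⟨x.1 + x.2, mem_range.mpr hlt,
        Finset.HasAntidiagonal.mem_antidiagonal.mpr rfl⟩)
    have : a ≤ x.1 ∨ b ≤ x.2 := by omega
    rcases this with h | h
    · simp [hF, hp _ h]
    · simp [hF, hq _ h]
  have sub2 : range a ×ˢ range b ⊆ range M ×ˢ range M := by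
    refine Finset.product_subset_product ?_ ?_ <;>
      exact Finset.range_subset_range.mpr (by omega)
  have key4 : ∑ x ∈ range M ×ˢ range M, F x = ∑ x ∈ range a ×ˢ range b, F x := by
    refine (Finset.sum_subset sub2 ?_).symm
    intro x hx hx'
    have hx1 := mem_range.mp (Finset.mem_product.mp hx).1
    have hx2 := mem_range.mp (Finset.mem_product.mp hx).2
    have : a ≤ x.1 ∨ b ≤ x.2 := by
      by_contra hcon
      push_neg at hcon
      exact hx' (Finset.mem_product.mpr ⟨mem_range.mpr hcon.1, mem_range.mpr hcon.2⟩)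
    rcases this with h | h
    · simp [hF, hp _ h]
    · simp [hF, hq _ h]
  rw [key1, key2, key3, key4, Finset.sum_product]
  refine sum_congr rfl ?_
  intro k _
  rw [Finset.mul_sum]
  refine sum_congr rfl ?_
  intro l _
  rw [hF]
  ring

theorem stmt16 (N : ℕ) (hN : 1 ≤ N) (f : ℝ → ℝ) (x : ℝ) (α : ℕ → ℝ)
    (hα : ∀ k : ℕ, α k =
      ((∏ i ∈ Finset.range (N - 1),
          ((1 : Polynomial ℤ) + Polynomial.X ^ (2 ^ i)) ^ (N - 1 - i)).coeff k : ℝ)) :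
    ∑ n ∈ Finset.range (2 ^ N), (-1 : ℝ) ^ s2 n * f (x + n) =
    (-1 : ℝ) ^ N * ∑ k ∈ Finset.range (2 ^ N - N), α k *
      ∑ l ∈ Finset.range (N + 1), (N.choose l : ℝ) * (-1 : ℝ) ^ (N - l) * f (x + k + l) := by
  set P : ℤ[X] := ∏ i ∈ range (N - 1), ((1 : ℤ[X]) + X ^ (2 ^ i)) ^ (N - 1 - i) with hPdef
  set g : ℕ → ℝ := fun n => f (x + n) with hg
  have hN2 : N + 1 ≤ 2 ^ N := (Nat.lt_two_pow_self (n := N))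
  -- key polynomial identity: Q = (-1)^N * (P * (X - 1)^N)
  have hQ : ∏ i ∈ range N, (1 - X ^ (2 ^ i) : ℤ[X]) = C ((-1:ℤ) ^ N) * (P * (X - 1) ^ N) := by
    rw [prodQ]
    have hsub : (1 - X : ℤ[X]) = C (-1 : ℤ) * (X - 1) := by
      simp [C_neg]
    rw [hsub, mul_pow, ← C_pow]
    ring
  have hconv := conv P ((X - 1) ^ N) (2 ^ N - N) (N + 1)
    (fun k hk => coeff_eq_zero_of_natDegree_lt (lt_of_le_of_lt (Pdeg N hN) (by omega)))
    (fun l hl => coeff_eq_zero_of_natDegree_lt (lt_of_le_of_lt natDegree_pow_le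
      (by
        have : (X - 1 : ℤ[X]).natDegree ≤ 1 := by
          refine le_trans (natDegree_sub_le _ _) ?_
          simp
        calc N * (X - 1 : ℤ[X]).natDegree ≤ N * 1 := by gcongr
          _ < l := by omega))) g
  have hrange : 2 ^ N - N + (N + 1) = 2 ^ N + 1 := by omega
  rw [hrange] at hconv
  -- LHS equals sum of Q coeffs times g
  have lhs_eq : ∑ n ∈ range (2 ^ N), (-1 : ℝ) ^ s2 n * f (x + n) =
      ∑ n ∈ range (2 ^ N + 1), ((P * (X - 1) ^ N).coeff n : ℝ) * ((-1 : ℝ) ^ N * g n) := by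
    have hQc : ∀ n, ((∏ i ∈ range N, (1 - X ^ (2 ^ i) : ℤ[X])).coeff n : ℝ) =
        (-1 : ℝ) ^ N * ((P * (X - 1) ^ N).coeff n : ℝ) := by
      intro n
      rw [hQ, coeff_C_mul]
      push_cast
      ring
    rw [Finset.sum_range_succ]
    have hlast : ((P * (X - 1) ^ N).coeff (2 ^ N) : ℝ) * ((-1 : ℝ) ^ N * g (2 ^ N)) = 0 := by
      have h0 : ((∏ i ∈ range N, (1 - X ^ (2 ^ i) : ℤ[X])).coeff (2 ^ N) : ℝ) = 0 := by
        rw [Qcoeff]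
        simp
      rw [hQc] at h0
      have := mul_eq_zero.mp h0
      rcases this with h | h
      · simp at h
      · rw [h]; ring
    rw [hlast, add_zero]
    refine sum_congr rfl ?_
    intro n hn
    have := hQc n
    rw [Qcoeff, if_pos (mem_range.mp hn)] at this
    push_cast at this
    simp only [hg]
    rw [this]
    ring
  rw [lhs_eq]
  have : ∑ n ∈ range (2 ^ N + 1), ((P * (X - 1) ^ N).coeff n : ℝ) * ((-1 : ℝ) ^ N * g n) =
      (-1 : ℝ) ^ N * ∑ n ∈ range (2 ^ N + 1), ((P * (X - 1) ^ N).coeff n : ℝ) * g n := by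
    rw [Finset.mul_sum]
    refine sum_congr rfl fun n _ => by ring
  rw [this, hconv]
  congr 1
  refine sum_congr rfl ?_
  intro k _
  rw [hα k]
  congr 1
  refine sum_congr rfl ?_
  intro l hl
  have hcoe : ((X - 1 : ℤ[X]) ^ N).coeff l = (-1 : ℤ) ^ (N - l) * (N.choose l : ℤ) := by
    have : (X - 1 : ℤ[X]) = X + C (-1 : ℤ) := by rw [C_neg, C_1, ← sub_eq_add_neg]
    rw [this, coeff_X_add_C_pow]
  rw [hcoe, hg]
  push_cast
  rw [add_assoc]
  ring
end

section
/- Let b ≥ 2 be an integer and let f : ℕ → ℝ be a function such that ∑_{n=1}^{∞} s_b(n)·|f(n)| < ∞ and ∑_{n=1}^{∞} |f(n)| < ∞. Then ∑_{n=1}^{∞} s_b(n)·( f(n) − ∑_{j=0}^{b−1} f(bn+j) ) = ∑_{j=1}^{b−1} j · ∑_{n=0}^{∞} f(bn+j). -/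
/-- Sum of digits of `n` in base `b`. -/
def digitSum (b n : ℕ) : ℕ := (Nat.digits b n).sum

lemma digitSum_mul_add (b : ℕ) (hb : 2 ≤ b) (n j : ℕ) (hj : j < b) :
    digitSum b (b * n + j) = digitSum b n + j := by
  rcases Nat.eq_zero_or_pos (b * n + j) with h | h
  · have hn : n = 0 := by
      rcases Nat.eq_zero_or_pos n with h' | h'
      · exact h'
      · nlinarith
    have hj0 : j = 0 := by omega
    simp [hn, hj0, digitSum]
  · unfold digitSum
    rw [Nat.digits_def' (by omega : 1 < b) h]
    have h1 : (b * n + j) % b = j := by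
      rw [Nat.mul_add_mod]; exact Nat.mod_eq_of_lt hj
    have h2 : (b * n + j) / b = n := by
      rw [Nat.mul_add_div (by omega), Nat.div_eq_of_lt hj]; omega
    rw [h1, h2, List.sum_cons]
    omega

lemma tsum_base_block (b : ℕ) (hb : 2 ≤ b) (G : ℕ → ℝ) (hG : Summable G) :
    ∑' n : ℕ, ∑ j ∈ Finset.range b, G (b * n + j) = ∑' m : ℕ, G m := by
  haveI : NeZero b := ⟨by omega⟩
  have hGe : Summable (fun p : ℕ × Fin b => G ((Nat.divModEquiv b).symm p)) :=
    ((Nat.divModEquiv b).symm.summable_iff).mpr hG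
  calc ∑' n : ℕ, ∑ j ∈ Finset.range b, G (b * n + j)
      = ∑' n : ℕ, ∑' j : Fin b, G ((Nat.divModEquiv b).symm (n, j)) := by
        refine tsum_congr fun n => ?_
        rw [tsum_fintype]
        rw [Finset.sum_range fun j => G (b * n + j)]
        refine Finset.sum_congr rfl fun j _ => ?_
        simp [Nat.divModEquiv, mul_comm]
    _ = ∑' p : ℕ × Fin b, G ((Nat.divModEquiv b).symm p) := (Summable.tsum_prod' hGe (fun n => Summable.of_finite)).symm
    _ = ∑' m : ℕ, G m := (Nat.divModEquiv b).symm.tsum_eq G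

theorem stmt18 (b : ℕ) (hb : 2 ≤ b) (f : ℕ → ℝ)
    (h1 : Summable (fun n : ℕ => (digitSum b (n + 1) : ℝ) * |f (n + 1)|))
    (h2 : Summable (fun n : ℕ => |f (n + 1)|)) :
    ∑' n : ℕ, (digitSum b (n + 1) : ℝ) *
        (f (n + 1) - ∑ j ∈ Finset.range b, f (b * (n + 1) + j)) =
    ∑ j ∈ Finset.Icc 1 (b - 1), (j : ℝ) * ∑' n : ℕ, f (b * n + j) := by
  set S : ℕ → ℝ := fun m => (digitSum b m : ℝ) with hSdef
  -- summability facts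
  have hA : Summable (fun m : ℕ => S m * |f m|) :=
    (summable_nat_add_iff 1).mp h1
  have hfabs : Summable (fun m : ℕ => |f m|) :=
    (summable_nat_add_iff 1).mp h2
  have hf : Summable f := summable_abs_iff.mp hfabs
  have hF : Summable (fun m : ℕ => S m * f m) := by
    refine Summable.of_abs (hA.congr fun m => ?_)
    rw [abs_mul, abs_of_nonneg (by positivity : (0:ℝ) ≤ S m)]
  -- per-residue summability
  have hinj : ∀ j : ℕ, Function.Injective (fun n : ℕ => b * n + j) := by
    intro j n m h
    simp only at h
    have hbm : b * n = b * m := by omega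
    exact Nat.eq_of_mul_eq_mul_left (by omega) hbm
  have hFn : ∀ j : ℕ, Summable (fun n : ℕ => S (b * n + j) * f (b * n + j)) :=
    fun j => hF.comp_injective (hinj j)
  have hfn : ∀ j : ℕ, Summable (fun n : ℕ => f (b * n + j)) :=
    fun j => hf.comp_injective (hinj j)
  -- the function T
  set T : ℕ → ℝ := fun n => S n * (f n - ∑ j ∈ Finset.range b, f (b * n + j)) with hTdef
  have hT : ∀ n : ℕ, T n = S n * f n -
      ∑ j ∈ Finset.range b, (S (b * n + j) * f (b * n + j) - (j : ℝ) * f (b * n + j)) := by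
    intro n
    rw [hTdef]
    simp only [mul_sub, Finset.mul_sum]
    congr 1
    refine Finset.sum_congr rfl fun j hj => ?_
    have hd : digitSum b (b * n + j) = digitSum b n + j :=
      digitSum_mul_add b hb n j (Finset.mem_range.mp hj)
    simp only [hSdef, hd]
    push_cast
    ring
  have hTsum : Summable T := by
    refine Summable.congr ?_ (fun n => (hT n).symm)
    exact hF.sub (summable_sum fun j _ => (hFn j).sub ((hfn j).mul_left (j : ℝ)))
  -- shift from (n+1) to n
  have hT0 : T 0 = 0 := by simp [hTdef, hSdef, digitSum]
  have hshift : ∑' n : ℕ, T (n + 1) = ∑' n : ℕ, T n := by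
    rw [Summable.tsum_eq_zero_add hTsum, hT0, zero_add]
  have hLHS : (∑' n : ℕ, (digitSum b (n + 1) : ℝ) *
      (f (n + 1) - ∑ j ∈ Finset.range b, f (b * (n + 1) + j))) = ∑' n : ℕ, T n := by
    rw [← hshift]
  rw [hLHS]
  -- main computation
  have step1 : ∑' n : ℕ, T n =
      (∑' m : ℕ, S m * f m) -
      ((∑' n : ℕ, ∑ j ∈ Finset.range b, S (b * n + j) * f (b * n + j)) -
       (∑' n : ℕ, ∑ j ∈ Finset.range b, (j : ℝ) * f (b * n + j))) := by
    rw [tsum_congr hT]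
    rw [Summable.tsum_sub hF (summable_sum fun j _ => (hFn j).sub ((hfn j).mul_left (j : ℝ)))]
    congr 1
    rw [← Summable.tsum_sub (summable_sum fun j _ => hFn j)
        (summable_sum fun j _ => (hfn j).mul_left (j : ℝ))]
    exact tsum_congr fun n => by rw [Finset.sum_sub_distrib]
  have step2 : (∑' n : ℕ, ∑ j ∈ Finset.range b, S (b * n + j) * f (b * n + j)) =
      ∑' m : ℕ, S m * f m :=
    tsum_base_block b hb _ hF
  have step3 : (∑' n : ℕ, ∑ j ∈ Finset.range b, (j : ℝ) * f (b * n + j)) =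
      ∑ j ∈ Finset.range b, (j : ℝ) * ∑' n : ℕ, f (b * n + j) := by
    rw [Summable.tsum_finsetSum fun j _ => (hfn j).mul_left (j : ℝ)]
    exact Finset.sum_congr rfl fun j _ => tsum_mul_left
  rw [step1, step2, step3]
  ring_nf
  -- now reduce range b to Icc 1 (b-1)
  have hsub : Finset.Icc 1 (b - 1) ⊆ Finset.range b := by
    intro x hx
    simp only [Finset.mem_Icc] at hx
    simp only [Finset.mem_range]
    omega
  rw [← Finset.sum_subset hsub (fun x hx hnx => by
    have : x = 0 := by
      simp only [Finset.mem_range] at hx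
      simp only [Finset.mem_Icc] at hnx
      omega
    simp [this])]
end

section
/- Let b ≥ 2 and p ≥ 1 be integers, let α > 2 be real, and let z ≥ 0 be real. Then ∑_{n=1}^{b^p−1} s_b(n)·(n+z)^{−α} = ∑_{l=0}^{p−1} [ζ₂(α, z+b^l, (1, b^l)) − ζ₂(α, z+b^l+b^p, (1, b^l))] − b·∑_{l=1}^{p} [ζ₂(α, z+b^l, (1, b^l)) − ζ₂(α, z+b^l+b^p, (1, b^l))], where ζ₂(α, x, (a₁, a₂)) = ∑_{m₁ ≥ 0} ∑_{m₂ ≥ 0} (x + a₁m₁ + a₂m₂)^{−α} is the Barnes double zeta function (the double series converges for α > 2, x > 0 and a₁, a₂ > 0). -/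
/-- Barnes double zeta function
`ζ₂(α, x, (a₁, a₂)) = ∑_{m₁ ≥ 0} ∑_{m₂ ≥ 0} (x + a₁m₁ + a₂m₂)^(-α)`. -/
noncomputable def barnesZeta2 (α x a₁ a₂ : ℝ) : ℝ :=
  ∑' m : ℕ × ℕ, (x + a₁ * m.1 + a₂ * m.2) ^ (-α)

namespace Stmt19Aux

noncomputable def F (z α : ℝ) (n : ℕ) : ℝ := ((n : ℝ) + z) ^ (-α)

lemma F_nonneg (z α : ℝ) (hz : 0 ≤ z) (n : ℕ) : 0 ≤ F z α n :=
  Real.rpow_nonneg (by positivity) _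

lemma digitSum_step (b : ℕ) (hb : 2 ≤ b) (n : ℕ) :
    digitSum b n = n % b + digitSum b (n / b) := by
  rcases Nat.eq_zero_or_pos n with h | h
  · simp [h, digitSum]
  · rw [digitSum, Nat.digits_def' hb h, List.sum_cons]; rfl

lemma digit_sum_eq (b : ℕ) (hb : 2 ≤ b) :
    ∀ p n : ℕ, n < b ^ p → ∑ l ∈ Finset.range p, n / b ^ l % b = digitSum b n := by
  intro p
  induction p with
  | zero =>
    intro n hn
    have : n = 0 := by simpa using hn
    simp [this, digitSum]
  | succ p ih =>
    intro n hn
    have hb0 : 0 < b := by omega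
    rw [Finset.sum_range_succ']
    have h1 : ∀ l, n / b ^ (l + 1) = (n / b) / b ^ l := by
      intro l
      rw [pow_succ', Nat.div_div_eq_div_mul]
    have h2 : n / b < b ^ p := by
      rw [Nat.div_lt_iff_lt_mul hb0, ← pow_succ]
      exact hn
    calc ∑ l ∈ Finset.range p, n / b ^ (l + 1) % b + n / b ^ 0 % b
        = ∑ l ∈ Finset.range p, (n / b) / b ^ l % b + n % b := by
          simp only [h1, pow_zero, Nat.div_one]
      _ = digitSum b (n / b) + n % b := by rw [ih _ h2]
      _ = digitSum b n := by rw [digitSum_step b hb n]; omega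

lemma summable_nF (z α : ℝ) (hα : 2 < α) (hz : 0 ≤ z) :
    Summable (fun n : ℕ => (n : ℝ) * F z α n) := by
  refine Summable.of_nonneg_of_le (f := fun n : ℕ => (n : ℝ) ^ (1 - α))
    (fun n => mul_nonneg (Nat.cast_nonneg n) (F_nonneg z α hz n)) (fun n => ?_)
    (Real.summable_nat_rpow.2 (by linarith))
  rcases Nat.eq_zero_or_pos n with h | h
  · simp [h, F, Real.zero_rpow (show (1:ℝ) - α ≠ 0 by linarith)]
  · have hn0 : (0:ℝ) < n := by exact_mod_cast h
    have hle : F z α n ≤ (n : ℝ) ^ (-α) :=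
      Real.rpow_le_rpow_of_nonpos hn0 (by linarith) (by linarith)
    calc (n : ℝ) * F z α n ≤ (n : ℝ) * (n : ℝ) ^ (-α) := by
          exact mul_le_mul_of_nonneg_left hle (by positivity)
      _ = (n : ℝ) ^ (1 - α) := by
          rw [show (1:ℝ) - α = 1 + -α by ring, Real.rpow_add hn0, Real.rpow_one]

lemma summable_F (z α : ℝ) (hα : 2 < α) (hz : 0 ≤ z) : Summable (F z α) := by
  rw [← summable_nat_add_iff 1]
  refine Summable.of_nonneg_of_le (f := fun n : ℕ => ((n + 1 : ℕ) : ℝ) ^ (-α))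
    (fun n => F_nonneg z α hz _) (fun n => ?_)
    ((summable_nat_add_iff 1).2 (Real.summable_nat_rpow.2 (by linarith)))
  have hn0 : (0:ℝ) < ((n + 1 : ℕ) : ℝ) := by positivity
  exact Real.rpow_le_rpow_of_nonpos hn0 (by linarith) (by linarith)

lemma summable_wF (z α : ℝ) (hα : 2 < α) (hz : 0 ≤ z) (c N : ℕ) :
    Summable (fun n : ℕ => ((n / c : ℕ) : ℝ) * F z α (n + N)) := by
  refine Summable.of_nonneg_of_le
    (fun n => mul_nonneg (Nat.cast_nonneg _) (F_nonneg z α hz _))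
    (fun n => ?_) (summable_nF z α hα hz)
  rcases Nat.eq_zero_or_pos n with h | h
  · simp [h, Nat.zero_div]
  · have hn0 : (0:ℝ) < (n:ℝ) + z := by
      have : (1:ℝ) ≤ (n:ℝ) := by exact_mod_cast h
      linarith
    have h1 : ((n / c : ℕ) : ℝ) ≤ (n : ℝ) := by
      exact_mod_cast Nat.cast_le.2 (Nat.div_le_self n c)
    have h2 : F z α (n + N) ≤ F z α n := by
      apply Real.rpow_le_rpow_of_nonpos hn0 ?_ (by linarith)
      push_cast; linarith
    exact mul_le_mul h1 h2 (F_nonneg z α hz _) (Nat.cast_nonneg n)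

def divEquiv (c : ℕ) (hc : 0 < c) : (ℕ × ℕ) ≃ Σ n : ℕ, Fin (n / c) where
  toFun m := ⟨m.1 + c * (m.2 + 1), ⟨m.2, by
    apply Nat.lt_of_succ_le
    rw [Nat.le_div_iff_mul_le hc, mul_comm]
    exact Nat.le_add_left _ _⟩⟩
  invFun x := (x.1 - c * (x.2.1 + 1), x.2.1)
  left_inv m := by simp
  right_inv := by
    rintro ⟨n, ⟨k, hk2⟩⟩
    have hk : c * (k + 1) ≤ n := by
      rw [mul_comm]
      exact (Nat.le_div_iff_mul_le hc).1 hk2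
    obtain ⟨m, rfl⟩ : ∃ m, m + c * (k + 1) = n := ⟨n - c * (k + 1), Nat.sub_add_cancel hk⟩
    refine Sigma.ext (by simp) ?_
    refine (Fin.heq_ext_iff ?_).2 rfl
    simp

lemma tsum_fin_const (m : ℕ) (r : ℝ) : ∑' _ : Fin m, r = (m : ℝ) * r := by
  rw [tsum_fintype]
  simp [Finset.sum_const, nsmul_eq_mul]

lemma barnes_eq (z α : ℝ) (hα : 2 < α) (hz : 0 ≤ z) (c N : ℕ) (hc : 0 < c) :
    barnesZeta2 α (z + c + N) 1 c = ∑' n : ℕ, ((n / c : ℕ) : ℝ) * F z α (n + N) := by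
  have hw : Summable (fun n : ℕ => ((n / c : ℕ) : ℝ) * F z α (n + N)) :=
    summable_wF z α hα hz c N
  have hwF : ∀ n : ℕ, ∑' _ : Fin (n / c), F z α (n + N) = ((n / c : ℕ) : ℝ) * F z α (n + N) :=
    fun n => tsum_fin_const _ _
  have hs : Summable (fun x : Σ n : ℕ, Fin (n / c) => F z α (x.1 + N)) := by
    refine (summable_sigma_of_nonneg (fun x => F_nonneg z α hz _)).2 ⟨fun n => ?_, ?_⟩
    · exact Summable.of_finite
    · simpa only [hwF] using hw
  have h1 : barnesZeta2 α (z + c + N) 1 c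
      = ∑' m : ℕ × ℕ, F z α ((divEquiv c hc m).1 + N) := by
    unfold barnesZeta2
    refine tsum_congr fun m => ?_
    show (z + c + N + 1 * m.1 + c * m.2) ^ (-α) = ((↑(m.1 + c * (m.2 + 1) + N) : ℝ) + z) ^ (-α)
    congr 1
    push_cast
    ring
  rw [h1, (divEquiv c hc).tsum_eq (fun x : Σ n : ℕ, Fin (n / c) => F z α (x.1 + N)),
    Summable.tsum_sigma hs]
  exact tsum_congr fun n => hwF n

lemma diff_eq (z α : ℝ) (hα : 2 < α) (hz : 0 ≤ z) (c B : ℕ) (hc : 0 < c) (hB : c ∣ B) :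
    barnesZeta2 α (z + c) 1 c - barnesZeta2 α (z + c + B) 1 c =
      (∑ n ∈ Finset.range B, ((n / c : ℕ) : ℝ) * F z α n) +
        ((B / c : ℕ) : ℝ) * ∑' n : ℕ, F z α (n + B) := by
  have hg : Summable (fun n : ℕ => ((n / c : ℕ) : ℝ) * F z α n) := by
    simpa using summable_wF z α hα hz c 0
  have hgB : Summable (fun n : ℕ => (((n + B) / c : ℕ) : ℝ) * F z α (n + B)) :=
    (summable_nat_add_iff B).2 hg
  have hFB : Summable (fun n : ℕ => F z α (n + B)) :=
    (summable_nat_add_iff B).2 (summable_F z α hα hz)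
  have e0 : barnesZeta2 α (z + c) 1 c = ∑' n : ℕ, ((n / c : ℕ) : ℝ) * F z α n := by
    have := barnes_eq z α hα hz c 0 hc
    simpa using this
  have e1 : barnesZeta2 α (z + c + B) 1 c = ∑' n : ℕ, ((n / c : ℕ) : ℝ) * F z α (n + B) :=
    barnes_eq z α hα hz c B hc
  have key : ∀ n : ℕ, ((n / c : ℕ) : ℝ) * F z α (n + B) =
      (((n + B) / c : ℕ) : ℝ) * F z α (n + B) - ((B / c : ℕ) : ℝ) * F z α (n + B) := by
    intro n
    have : (n + B) / c = n / c + B / c := Nat.add_div_of_dvd_left hB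
    rw [this]
    push_cast
    ring
  have e2 : ∑' n : ℕ, ((n / c : ℕ) : ℝ) * F z α (n + B) =
      (∑' n : ℕ, (((n + B) / c : ℕ) : ℝ) * F z α (n + B)) -
        ((B / c : ℕ) : ℝ) * ∑' n : ℕ, F z α (n + B) := by
    rw [← tsum_mul_left, ← Summable.tsum_sub hgB (hFB.mul_left _)]
    exact tsum_congr key
  have e3 : ∑ n ∈ Finset.range B, ((n / c : ℕ) : ℝ) * F z α n +
      ∑' n : ℕ, (((n + B) / c : ℕ) : ℝ) * F z α (n + B) =
      ∑' n : ℕ, ((n / c : ℕ) : ℝ) * F z α n := Summable.sum_add_tsum_nat_add B hg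
  rw [e0, e1, e2]
  linarith [e3]

end Stmt19Aux

open Stmt19Aux in
theorem stmt19 (b p : ℕ) (hb : 2 ≤ b) (hp : 1 ≤ p) (α z : ℝ) (hα : 2 < α) (hz : 0 ≤ z) :
    ∑ n ∈ Finset.Icc 1 (b ^ p - 1), (digitSum b n : ℝ) * ((n : ℝ) + z) ^ (-α) =
    (∑ l ∈ Finset.range p,
      (barnesZeta2 α (z + b ^ l) 1 (b ^ l) - barnesZeta2 α (z + b ^ l + b ^ p) 1 (b ^ l))) -
    (b : ℝ) * ∑ l ∈ Finset.Icc 1 p,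
      (barnesZeta2 α (z + b ^ l) 1 (b ^ l) - barnesZeta2 α (z + b ^ l + b ^ p) 1 (b ^ l)) := by
  have hb0 : 0 < b := by omega
  set B := b ^ p with hBdef
  have hB1 : 1 ≤ B := Nat.one_le_pow _ _ hb0
  set T := ∑' n : ℕ, F z α (n + B) with hTdef
  set G : ℕ → ℝ := fun l => ∑ n ∈ Finset.range B, ((n / b ^ l : ℕ) : ℝ) * F z α n with hGdef
  simp only [← Nat.cast_pow]
  have hdiff : ∀ l, l ≤ p →
      barnesZeta2 α (z + ((b ^ l : ℕ) : ℝ)) 1 ((b ^ l : ℕ) : ℝ) -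
        barnesZeta2 α (z + ((b ^ l : ℕ) : ℝ) + ((B : ℕ) : ℝ)) 1 ((b ^ l : ℕ) : ℝ) =
      G l + ((b ^ (p - l) : ℕ) : ℝ) * T := by
    intro l hl
    have hc : 0 < b ^ l := Nat.pow_pos hb0
    have hdvd : b ^ l ∣ B := pow_dvd_pow b hl
    have hquot : B / b ^ l = b ^ (p - l) := Nat.pow_div hl hb0
    have h := diff_eq z α hα hz (b ^ l) B hc hdvd
    rw [hquot] at h
    exact h
  rw [Finset.sum_congr rfl (fun l hl => hdiff l (Nat.le_of_lt (Finset.mem_range.1 hl))),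
    Finset.sum_congr rfl (fun l hl => hdiff l (Finset.mem_Icc.1 hl).2)]
  -- coefficient identity
  have natA : ∑ l ∈ Finset.range p, b ^ (p - l) = b * ∑ l ∈ Finset.Icc 1 p, b ^ (p - l) := by
    rw [Finset.mul_sum, ← Finset.Ico_add_one_right_eq_Icc, Finset.sum_Ico_eq_sum_range]
    simp only [Nat.add_sub_cancel]
    refine Finset.sum_congr rfl fun i hi => ?_
    have hi' : i < p := Finset.mem_range.1 hi
    rw [← pow_succ']
    congr 1
    omega
  have claimA : ∑ l ∈ Finset.range p, ((b ^ (p - l) : ℕ) : ℝ) =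
      (b : ℝ) * ∑ l ∈ Finset.Icc 1 p, ((b ^ (p - l) : ℕ) : ℝ) := by
    exact_mod_cast congrArg (fun k : ℕ => (k : ℝ)) natA
  -- finite part
  have step : ∀ l : ℕ, G l - (b : ℝ) * G (l + 1) =
      ∑ n ∈ Finset.range B, ((n / b ^ l % b : ℕ) : ℝ) * F z α n := by
    intro l
    simp only [hGdef]
    rw [Finset.mul_sum, ← Finset.sum_sub_distrib]
    refine Finset.sum_congr rfl fun n _ => ?_
    have h1 : n / b ^ (l + 1) = n / b ^ l / b := by
      rw [pow_succ, ← Nat.div_div_eq_div_mul]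
    have h2 : n / b ^ l % b + b * (n / b ^ l / b) = n / b ^ l := Nat.mod_add_div _ _
    rw [h1]
    have h3 := congrArg (fun k : ℕ => (k : ℝ)) h2
    push_cast at h3
    linear_combination (-(F z α n)) * h3
  have claimB : ∑ n ∈ Finset.Icc 1 (B - 1), (digitSum b n : ℝ) * F z α n =
      ∑ l ∈ Finset.range p, G l - (b : ℝ) * ∑ l ∈ Finset.Icc 1 p, G l := by
    have hIcc : ∑ l ∈ Finset.Icc 1 p, G l = ∑ i ∈ Finset.range p, G (1 + i) := by
      rw [← Finset.Ico_add_one_right_eq_Icc, Finset.sum_Ico_eq_sum_range]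
      simp only [Nat.add_sub_cancel]
    rw [hIcc, Finset.mul_sum, ← Finset.sum_sub_distrib]
    have : ∀ i, G i - (b : ℝ) * G (1 + i) = G i - (b : ℝ) * G (i + 1) := by
      intro i; rw [add_comm 1 i]
    simp only [this, step]
    rw [Finset.sum_comm]
    have inner : ∀ n, n ∈ Finset.range B →
        ∑ l ∈ Finset.range p, ((n / b ^ l % b : ℕ) : ℝ) * F z α n =
        (digitSum b n : ℝ) * F z α n := by
      intro n hn
      rw [← Finset.sum_mul, ← Nat.cast_sum]
      rw [digit_sum_eq b hb p n (Finset.mem_range.1 hn)]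
    rw [Finset.sum_congr rfl inner]
    have hins : Finset.range B = insert 0 (Finset.Icc 1 (B - 1)) := by
      ext x
      simp only [Finset.mem_range, Finset.mem_insert, Finset.mem_Icc]
      omega
    rw [hins, Finset.sum_insert (by simp)]
    simp [digitSum]
  calc ∑ n ∈ Finset.Icc 1 (B - 1), (digitSum b n : ℝ) * ((n : ℝ) + z) ^ (-α)
      = ∑ n ∈ Finset.Icc 1 (B - 1), (digitSum b n : ℝ) * F z α n := rfl
    _ = ∑ l ∈ Finset.range p, G l - (b : ℝ) * ∑ l ∈ Finset.Icc 1 p, G l := claimB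
    _ = (∑ l ∈ Finset.range p, (G l + ((b ^ (p - l) : ℕ) : ℝ) * T)) -
        (b : ℝ) * ∑ l ∈ Finset.Icc 1 p, (G l + ((b ^ (p - l) : ℕ) : ℝ) * T) := by
          rw [Finset.sum_add_distrib, Finset.sum_add_distrib, ← Finset.sum_mul,
            ← Finset.sum_mul, claimA]
          ring
end
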